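/- The Baire space ℕ → ℕ is a topological retract of the space C(ℕ → ℕ, Bool) of continuous functions from the Baire space to the discrete two-point space, endowed with the compact-open topology: there exist continuous maps s : (ℕ → ℕ) → C(ℕ → ℕ, Bool) and r : C(ℕ → ℕ, Bool) → (ℕ → ℕ) such that r ∘ s is the identity on ℕ → ℕ. -/
import Mathlib

open Topology

namespace Stmt15Aux

/-- test points: `e n k` has first coordinate `n`, then `k` ones, then zeros. -/
def e (n k : ℕ) : ℕ → ℕ := fun i => if i = 0 then n else if i ≤ k then 1 else 0

/-- the limit of `e n k` as `k → ∞`. -/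
def elim' (n : ℕ) : ℕ → ℕ := fun i => if i = 0 then n else 1

/-- uncurried section map. -/
def F : (ℕ → ℕ) × (ℕ → ℕ) → Bool := fun p => decide (∀ i < p.1 (p.2 0), p.2 (i + 1) = 1)

lemma F_cont : Continuous F := by
  apply IsLocallyConstant.continuous
  rw [IsLocallyConstant.iff_exists_open]
  rintro ⟨x, y⟩
  refine ⟨{p : (ℕ → ℕ) × (ℕ → ℕ) | p.2 0 = y 0 ∧ p.1 (y 0) = x (y 0) ∧
      ∀ i < x (y 0), p.2 (i + 1) = y (i + 1)}, ?_, ⟨rfl, rfl, fun _ _ => rfl⟩, ?_⟩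
  · have hc1 : Continuous fun p : (ℕ → ℕ) × (ℕ → ℕ) => p.2 0 :=
      (continuous_apply 0).comp continuous_snd
    have h1 : IsOpen {p : (ℕ → ℕ) × (ℕ → ℕ) | p.2 0 = y 0} :=
      hc1.isOpen_preimage _ (isOpen_discrete ({y 0} : Set ℕ))
    have hc2 : Continuous fun p : (ℕ → ℕ) × (ℕ → ℕ) => p.1 (y 0) :=
      (continuous_apply (y 0)).comp continuous_fst
    have h2 : IsOpen {p : (ℕ → ℕ) × (ℕ → ℕ) | p.1 (y 0) = x (y 0)} :=
      hc2.isOpen_preimage _ (isOpen_discrete ({x (y 0)} : Set ℕ))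
    have h3 : IsOpen {p : (ℕ → ℕ) × (ℕ → ℕ) | ∀ i < x (y 0), p.2 (i + 1) = y (i + 1)} := by
      have : {p : (ℕ → ℕ) × (ℕ → ℕ) | ∀ i < x (y 0), p.2 (i + 1) = y (i + 1)} =
          ⋂ i ∈ Finset.range (x (y 0)), {p : (ℕ → ℕ) × (ℕ → ℕ) | p.2 (i + 1) = y (i + 1)} := by
        ext p; simp
      rw [this]
      refine isOpen_biInter_finset fun i _ => ?_
      have hc3 : Continuous fun p : (ℕ → ℕ) × (ℕ → ℕ) => p.2 (i + 1) :=
        (continuous_apply (i + 1)).comp continuous_snd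
      exact hc3.isOpen_preimage _ (isOpen_discrete ({y (i + 1)} : Set ℕ))
    have : {p : (ℕ → ℕ) × (ℕ → ℕ) | p.2 0 = y 0 ∧ p.1 (y 0) = x (y 0) ∧
        ∀ i < x (y 0), p.2 (i + 1) = y (i + 1)} =
        {p : (ℕ → ℕ) × (ℕ → ℕ) | p.2 0 = y 0} ∩
        ({p | p.1 (y 0) = x (y 0)} ∩ {p | ∀ i < x (y 0), p.2 (i + 1) = y (i + 1)}) := by
      ext p; simp [Set.mem_inter_iff, and_assoc]
    rw [this]
    exact h1.inter (h2.inter h3)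
  · rintro ⟨x', y'⟩ ⟨h0, h1, h2⟩
    simp only [F, decide_eq_decide]
    rw [show y' 0 = y 0 from h0, show x' (y 0) = x (y 0) from h1]
    exact ⟨fun h i hi => (h2 i hi).symm.trans (h i hi),
      fun h i hi => (h2 i hi).trans (h i hi)⟩

/-- the section. -/
noncomputable def s : (ℕ → ℕ) → C(ℕ → ℕ, Bool) :=
  fun x => (ContinuousMap.curry ⟨F, F_cont⟩) x

/-- the retraction. -/
noncomputable def r : C(ℕ → ℕ, Bool) → (ℕ → ℕ) :=
  fun f n => sInf {k | f (e n k) = true}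

lemma tendsto_e (n : ℕ) : Filter.Tendsto (e n) Filter.atTop (𝓝 (elim' n)) := by
  rw [tendsto_pi_nhds]
  intro i
  refine Filter.Tendsto.congr' ?_ tendsto_const_nhds
  filter_upwards [Filter.eventually_ge_atTop i] with k hk
  unfold e elim'
  rcases Nat.eq_zero_or_pos i with h | h
  · simp [h]
  · simp [Nat.pos_iff_ne_zero.mp h, Nat.le_trans (Nat.le_of_lt (Nat.lt_succ_self _)) _, hk]

lemma isCompact_K (n : ℕ) : IsCompact (insert (elim' n) (Set.range (e n))) :=
  (tendsto_e n).isCompact_insert_range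

lemma r_cont : Continuous r := by
  refine continuous_pi fun n => IsLocallyConstant.continuous ?_
  rw [IsLocallyConstant.iff_exists_open]
  intro f
  set K := insert (elim' n) (Set.range (e n)) with hK
  have hKc := isCompact_K n
  refine ⟨{g : C(ℕ → ℕ, Bool) | Set.MapsTo g (K ∩ f ⁻¹' {true}) {true}} ∩
      {g : C(ℕ → ℕ, Bool) | Set.MapsTo g (K ∩ f ⁻¹' {false}) {false}}, ?_, ?_, ?_⟩
  · exact (ContinuousMap.isOpen_setOf_mapsTo
        (hKc.inter_right (IsClosed.preimage f.continuous (isClosed_discrete _))) (isOpen_discrete _)).inter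
      (ContinuousMap.isOpen_setOf_mapsTo
        (hKc.inter_right (IsClosed.preimage f.continuous (isClosed_discrete _))) (isOpen_discrete _))
  · constructor <;> exact fun y hy => hy.2
  · rintro g ⟨hgt, hgf⟩
    have heq : ∀ y ∈ K, g y = f y := by
      intro y hy
      cases hfy : f y with
      | false => exact hgf ⟨hy, hfy⟩
      | true => exact hgt ⟨hy, hfy⟩
    have : {k | g (e n k) = true} = {k | f (e n k) = true} := by
      ext k
      rw [Set.mem_setOf_eq, Set.mem_setOf_eq, heq _ (Set.mem_insert_of_mem _ ⟨k, rfl⟩)]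
    simp only [r, this]

lemma s_apply_e (x : ℕ → ℕ) (n k : ℕ) : s x (e n k) = decide (x n ≤ k) := by
  have h0 : e n k 0 = n := by simp [e]
  simp only [s, ContinuousMap.curry_apply, ContinuousMap.coe_mk, F, h0, decide_eq_decide]
  constructor
  · intro h
    by_contra hk
    push_neg at hk
    have := h k hk
    simp [e, Nat.lt_irrefl] at this
  · intro h i hi
    have : i + 1 ≤ k := Nat.succ_le_of_lt (Nat.lt_of_lt_of_le hi h)
    simp [e, this]

theorem retract : r ∘ s = id := by
  funext x n
  have : {k | s x (e n k) = true} = Set.Ici (x n) := by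
    ext k
    simp [s_apply_e, Set.mem_Ici]
  simp only [Function.comp_apply, r, this, csInf_Ici, id_eq]

end Stmt15Aux

/-- The Baire space `ℕ → ℕ` is a topological retract of the space `C(ℕ → ℕ, Bool)` of
continuous maps to the discrete two-point space, with the compact-open topology. -/
theorem stmt15 :
    ∃ (s : (ℕ → ℕ) → C(ℕ → ℕ, Bool)) (r : C(ℕ → ℕ, Bool) → (ℕ → ℕ)),
      Continuous s ∧ Continuous r ∧ r ∘ s = id :=
  ⟨Stmt15Aux.s, Stmt15Aux.r, (ContinuousMap.curry ⟨Stmt15Aux.F, Stmt15Aux.F_cont⟩).continuous,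
    Stmt15Aux.r_cont, Stmt15Aux.retract⟩
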